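/- For n ≥ 2, the vector space of 'Riemann candidates', i.e. tensors R : Fin n → Fin n → Fin n → Fin n → ℝ satisfying R_{kl,ij} = −R_{lk,ij} = −R_{kl,ji} = R_{ij,kl} and the first Bianchi identity R_{kl,ij} + R_{ki,jl} + R_{kj,li} = 0, has dimension n²(n²−1)/12. -/
import Mathlib

open Module LinearMap

/-- The projector onto Riemann-symmetry tensors. -/
noncomputable def riemProj (n : ℕ) :
    (Fin n → Fin n → Fin n → Fin n → ℝ) →ₗ[ℝ] (Fin n → Fin n → Fin n → Fin n → ℝ) where
  toFun x := fun k l i j =>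
      (1/12) * x k l i j
      + (-1/12) * x k l j i
      + (1/24) * x k i l j
      + (-1/24) * x k i j l
      + (-1/24) * x k j l i
      + (1/24) * x k j i l
      + (-1/12) * x l k i j
      + (1/12) * x l k j i
      + (-1/24) * x l i k j
      + (1/24) * x l i j k
      + (1/24) * x l j k i
      + (-1/24) * x l j i k
      + (-1/24) * x i k l j
      + (1/24) * x i k j l
      + (1/24) * x i l k j
      + (-1/24) * x i l j k
      + (1/12) * x i j k l
      + (-1/12) * x i j l k
      + (1/24) * x j k l i
      + (-1/24) * x j k i l
      + (-1/24) * x j l k i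
      + (1/24) * x j l i k
      + (-1/12) * x j i k l
      + (1/12) * x j i l k
  map_add' x y := by funext k l i j; simp only [Pi.add_apply]; ring
  map_smul' c x := by funext k l i j; simp only [Pi.smul_apply, smul_eq_mul, RingHom.id_apply]; ring

noncomputable def flatEquiv (n : ℕ) :
    (Fin n → Fin n → Fin n → Fin n → ℝ) ≃ₗ[ℝ] ((Fin n × Fin n × Fin n × Fin n) → ℝ) where
  toFun x := fun p => x p.1 p.2.1 p.2.2.1 p.2.2.2
  invFun f := fun k l i j => f (k, l, i, j)
  map_add' _ _ := rfl
  map_smul' _ _ := rfl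
  left_inv _ := rfl
  right_inv _ := rfl

private lemma sum_ite_const {α : Type*} [Fintype α] (c : Prop) [Decidable c] (f : α → ℝ) :
    (∑ x : α, if c then f x else 0) = if c then ∑ x : α, f x else 0 := by
  split <;> simp

theorem stmt_2 (n : ℕ) (hn : 2 ≤ n)
    (S : Submodule ℝ (Fin n → Fin n → Fin n → Fin n → ℝ))
    (hS : ∀ R, R ∈ S ↔
      ((∀ k l i j, R k l i j = - R l k i j ∧ R k l i j = - R k l j i ∧
          R k l i j = R i j k l) ∧
        (∀ k l i j, R k l i j + R k i j l + R k j l i = 0))) :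
    Module.finrank ℝ S = n ^ 2 * (n ^ 2 - 1) / 12 := by
  have hproj : LinearMap.IsProj S (riemProj n) := by
    constructor
    · intro x
      rw [hS]
      refine ⟨fun k l i j => ⟨?_, ?_, ?_⟩, fun k l i j => ?_⟩ <;>
        · show _ = _
          simp only [riemProj, LinearMap.coe_mk, AddHom.coe_mk]
          ring
    · intro R hR
      obtain ⟨h1, h2⟩ := (hS R).mp hR
      have e1 : ∀ a b c d, R a b c d = - R b a c d := fun a b c d => (h1 a b c d).1
      have e2 : ∀ a b c d, R a b c d = - R a b d c := fun a b c d => (h1 a b c d).2.1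
      have e3 : ∀ a b c d, R a b c d = R c d a b := fun a b c d => (h1 a b c d).2.2
      funext k l i j
      show _ = _
      simp only [riemProj, LinearMap.coe_mk, AddHom.coe_mk]
      linarith [e1 k l i j, e1 k l j i, e1 k i l j, e1 k i j l, e1 k j l i, e1 k j i l,
        e1 l k i j, e1 l k j i, e1 i j k l, e1 i j l k, e1 j i k l, e1 j i l k,
        e1 l i k j, e1 l i j k, e1 l j k i, e1 l j i k, e1 i k l j, e1 i k j l,
        e1 i l k j, e1 i l j k, e1 j k l i, e1 j k i l, e1 j l k i, e1 j l i k,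
        e2 k l i j, e2 k l j i, e2 k i l j, e2 k i j l, e2 k j l i, e2 k j i l,
        e2 l k i j, e2 l k j i, e2 i j k l, e2 i j l k, e2 j i k l, e2 j i l k,
        e2 l i k j, e2 l i j k, e2 l j k i, e2 l j i k, e2 i k l j, e2 i k j l,
        e2 i l k j, e2 i l j k, e2 j k l i, e2 j k i l, e2 j l k i, e2 j l i k,
        e3 k l i j, e3 k l j i, e3 k i l j, e3 k i j l, e3 k j l i, e3 k j i l,
        e3 l k i j, e3 l k j i, e3 i j k l, e3 i j l k, e3 j i k l, e3 j i l k,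
        e3 l i k j, e3 l i j k, e3 l j k i, e3 l j i k, e3 i k l j, e3 i k j l,
        e3 i l k j, e3 i l j k, e3 j k l i, e3 j k i l, e3 j l k i, e3 j l i k,
        h2 k l i j, h2 k i j l, h2 k j l i]
  have htr : LinearMap.trace ℝ _ (riemProj n) = (finrank ℝ S : ℝ) := hproj.trace
  have htr2 : LinearMap.trace ℝ _ ((flatEquiv n).conj (riemProj n))
      = LinearMap.trace ℝ _ (riemProj n) := LinearMap.trace_conj' _ _
  have hval : LinearMap.trace ℝ _ ((flatEquiv n).conj (riemProj n))
      = ((n : ℝ) ^ 4 - (n : ℝ) ^ 2) / 12 := by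
    rw [LinearMap.trace_eq_matrix_trace ℝ (Pi.basisFun ℝ (Fin n × Fin n × Fin n × Fin n))]
    rw [Matrix.trace]
    simp only [Matrix.diag, LinearMap.toMatrix_apply, Pi.basisFun_apply, Pi.basisFun_repr, LinearEquiv.conj_apply]
    simp only [LinearMap.comp_apply, LinearEquiv.coe_coe, flatEquiv, riemProj,
      LinearEquiv.coe_mk, LinearMap.coe_mk, AddHom.coe_mk, LinearEquiv.coe_symm_mk,
      Pi.single_apply]
    simp only [if_true, Fintype.sum_prod_type, Prod.mk.injEq, ite_and, mul_ite, mul_one,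
      mul_zero, Finset.sum_add_distrib, Finset.sum_ite_eq, Finset.sum_ite_eq',
      Finset.mem_univ, if_true, Finset.sum_const, Finset.card_univ, Fintype.card_fin,
      nsmul_eq_mul, eq_self_iff_true, sum_ite_const, Fintype.card_prod, Fintype.card_fin]
    push_cast
    ring
  have hfr : (finrank ℝ S : ℝ) = ((n : ℝ) ^ 4 - (n : ℝ) ^ 2) / 12 := by
    rw [← htr, ← htr2, hval]
  have hn2 : 1 ≤ n ^ 2 := Nat.one_le_pow _ _ (by omega)
  have h12 : finrank ℝ S * 12 = n ^ 2 * (n ^ 2 - 1) := by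
    have : ((finrank ℝ S * 12 : ℕ) : ℝ) = ((n ^ 2 * (n ^ 2 - 1) : ℕ) : ℝ) := by
      push_cast [hn2]
      rw [hfr]
      ring
    exact_mod_cast this
  omega
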